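/- Let k ≥ 1 and let I be an ideal of the polynomial ring ℂ[x,y] such that the quotient ℂ[x,y]/I has dimension k as a ℂ-vector space, the images of x and y in ℂ[x,y]/I are nilpotent, and I is homogeneous with respect to the grading in which deg x = 0 and deg y = 1 (i.e., for every f ∈ I, each y-homogeneous component of f again lies in I). For each i ∈ ℕ let n_i be the least natural number n such that x^n y^i ∈ I. Then each n_i is well defined (such an n exists), n_i = 0 for all but finitely many i, the sum ∑_{i∈ℕ} n_i equals k, and I is exactly the ideal of ℂ[x,y] generated by the monomials {x^{n_i} y^i : i ∈ ℕ}. -/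

import Mathlib

open MvPolynomial

/-- The variable `x` in `ℂ[x,y]`. -/
noncomputable def Px : MvPolynomial (Fin 2) ℂ := X 0

/-- The variable `y` in `ℂ[x,y]`. -/
noncomputable def Py : MvPolynomial (Fin 2) ℂ := X 1

/-- The `y`-grading weight on `ℂ[x,y]`: `deg x = 0`, `deg y = 1`. -/
def yWeight : Fin 2 → ℕ := ![0, 1]

lemma fin2_finsupp_eq (m : Fin 2 →₀ ℕ) :
    m = Finsupp.single 0 (m 0) + Finsupp.single 1 (m 1) := by
  ext i; fin_cases i <;> simp

lemma weight_yWeight (m : Fin 2 →₀ ℕ) : Finsupp.weight yWeight m = m 1 := by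
  rw [Finsupp.weight_apply]
  rw [fin2_finsupp_eq m, Finsupp.sum_add_index]
  · simp [yWeight, Finsupp.sum_single_index]
  · intros; simp
  · intros; ring

lemma monomial_eq_PxPy (a b : ℕ) (c : ℂ) :
    (monomial (Finsupp.single 0 a + Finsupp.single 1 b) c : MvPolynomial (Fin 2) ℂ)
      = MvPolynomial.C c * Px ^ a * Py ^ b := by
  rw [Px, Py, X_pow_eq_monomial, X_pow_eq_monomial,
    C_mul_monomial, monomial_mul]
  simp [add_comm]

/-- a `y`-graded ideal `I ⊆ ℂ[x,y]` of colength `k ≥ 1` supported at the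
origin (images of `x`, `y` nilpotent in the quotient) is generated by the monomials
`x^{n_i} y^i`, where `n_i` is the least `n` with `x^n y^i ∈ I`; moreover `∑ n_i = k`. -/
theorem stmt0 (k : ℕ) (hk : 1 ≤ k) (I : Ideal (MvPolynomial (Fin 2) ℂ))
    (hdim : Module.finrank ℂ (MvPolynomial (Fin 2) ℂ ⧸ I) = k)
    (hx : IsNilpotent (Ideal.Quotient.mk I Px))
    (hy : IsNilpotent (Ideal.Quotient.mk I Py))
    (hhom : ∀ f ∈ I, ∀ d : ℕ, weightedHomogeneousComponent yWeight d f ∈ I) :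
    ∃ n : ℕ → ℕ,
      (∀ i : ℕ, IsLeast {m : ℕ | Px ^ m * Py ^ i ∈ I} (n i)) ∧
      {i : ℕ | n i ≠ 0}.Finite ∧
      (∑ᶠ i : ℕ, n i) = k ∧
      I = Ideal.span (Set.range fun i : ℕ => Px ^ n i * Py ^ i) := by
  classical
  obtain ⟨N, hN0⟩ := hx
  have hN : Px ^ N ∈ I := by
    rwa [← map_pow, Ideal.Quotient.eq_zero_iff_mem] at hN0
  obtain ⟨M, hM0⟩ := hy
  have hM : Py ^ M ∈ I := by
    rwa [← map_pow, Ideal.Quotient.eq_zero_iff_mem] at hM0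
  set n : ℕ → ℕ := fun i => sInf {m | Px ^ m * Py ^ i ∈ I} with hn
  have hne : ∀ i, {m | Px ^ m * Py ^ i ∈ I}.Nonempty :=
    fun i => ⟨N, Ideal.mul_mem_right _ _ hN⟩
  have hleast : ∀ i, IsLeast {m | Px ^ m * Py ^ i ∈ I} (n i) :=
    fun i => ⟨Nat.sInf_mem (hne i), fun m hm => Nat.sInf_le hm⟩
  have hmem : ∀ i, Px ^ n i * Py ^ i ∈ I := fun i => (hleast i).1
  -- the ideals J d ⊆ ℂ[X]
  let Φ : Polynomial ℂ →ₐ[ℂ] MvPolynomial (Fin 2) ℂ := Polynomial.aeval Px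
  have hΦX : ∀ m : ℕ, Φ (Polynomial.X ^ m) = Px ^ m := by
    intro m; simp [Φ]
  let J : ℕ → Ideal (Polynomial ℂ) := fun d =>
    { carrier := {p | Φ p * Py ^ d ∈ I}
      add_mem' := fun {p q} hp hq => by
        simpa [add_mul] using I.add_mem hp hq
      zero_mem' := by simp
      smul_mem' := fun c p hp => by
        simpa [smul_eq_mul, map_mul, mul_assoc] using I.mul_mem_left (Φ c) hp }
  have hJ : ∀ d p, p ∈ J d ↔ Φ p * Py ^ d ∈ I := fun _ _ => Iff.rfl
  have hJchar : ∀ d p, p ∈ J d ↔ Polynomial.X ^ n d ∣ p := by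
    intro d
    obtain ⟨g, hg⟩ := (IsPrincipalIdealRing.principal (J d)).principal
    have hXN : Polynomial.X ^ N ∈ J d := by
      rw [hJ, hΦX]; exact Ideal.mul_mem_right _ _ hN
    have hgdvd : g ∣ Polynomial.X ^ N := by
      rw [hg] at hXN
      exact (Ideal.mem_span_singleton).mp hXN
    obtain ⟨m, hmN, hass⟩ := (dvd_prime_pow Polynomial.prime_X N).mp hgdvd
    have hJm : ∀ p, p ∈ J d ↔ Polynomial.X ^ m ∣ p := by
      intro p
      rw [hg, Ideal.submodule_span_eq, Ideal.mem_span_singleton]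
      exact hass.dvd_iff_dvd_left
    have hXm : Px ^ m * Py ^ d ∈ I := by
      have := (hJm (Polynomial.X ^ m)).mpr dvd_rfl
      rwa [hJ, hΦX] at this
    have h1 : n d ≤ m := Nat.sInf_le hXm
    have h2 : m ≤ n d := by
      have hXn : Polynomial.X ^ n d ∈ J d := by
        rw [hJ, hΦX]; exact hmem d
      have := (hJm _).mp hXn
      exact (pow_dvd_pow_iff Polynomial.X_ne_zero Polynomial.not_isUnit_X).mp this
    have : n d = m := le_antisymm h1 h2
    rw [this]
    exact hJm
  -- key lemma about weighted homogeneous elements of I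
  have key : ∀ (d : ℕ) (g : MvPolynomial (Fin 2) ℂ), g ∈ I →
      g.IsWeightedHomogeneous yWeight d →
      ∃ q, g = q * (Px ^ n d * Py ^ d) := by
    intro d g hgI hgh
    set p : Polynomial ℂ :=
      g.support.sum (fun m => Polynomial.C (coeff m g) * Polynomial.X ^ (m 0)) with hp
    have hrep : Φ p * Py ^ d = g := by
      rw [hp, map_sum, Finset.sum_mul]
      conv_rhs => rw [g.as_sum]
      refine Finset.sum_congr rfl fun m hm => ?_
      have hm1 : m 1 = d := by
        have := hgh (mem_support_iff.mp hm)
        rwa [weight_yWeight] at this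
      rw [map_mul, map_pow, Polynomial.aeval_X, Polynomial.aeval_C]
      have he : (Finsupp.single 0 (m 0) + Finsupp.single 1 (m 1) : Fin 2 →₀ ℕ) = m :=
        (fin2_finsupp_eq m).symm
      rw [MvPolynomial.algebraMap_eq, ← hm1, ← monomial_eq_PxPy, he]
    have hpJ : p ∈ J d := by
      rw [hJ, hrep]; exact hgI
    obtain ⟨q', hq'⟩ := (hJchar d p).mp hpJ
    refine ⟨Φ q', ?_⟩
    rw [← hrep, hq', map_mul, hΦX]
    ring
  -- span equality
  have hspan : I = Ideal.span (Set.range fun i : ℕ => Px ^ n i * Py ^ i) := by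
    apply le_antisymm
    · intro f hf
      rw [← sum_weightedHomogeneousComponent yWeight f,
        finsum_eq_sum _ (weightedHomogeneousComponent_finsupp f)]
      apply Ideal.sum_mem
      intro d _
      obtain ⟨q, hq⟩ := key d _ (hhom f hf d)
        (weightedHomogeneousComponent_isWeightedHomogeneous d f)
      rw [hq]
      exact Ideal.mul_mem_left _ _ (Ideal.subset_span ⟨d, rfl⟩)
    · rw [Ideal.span_le]
      rintro _ ⟨i, rfl⟩
      exact hmem i
  have hn0 : ∀ b, M ≤ b → n b = 0 := by
    intro b hb
    have h : Px ^ 0 * Py ^ b ∈ I := by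
      rw [pow_zero, one_mul, ← Nat.sub_add_cancel hb, pow_add]
      exact Ideal.mul_mem_left _ _ hM
    exact Nat.le_zero.mp ((hleast b).2 h)
  have hfin : {i : ℕ | n i ≠ 0}.Finite := by
    apply (Set.finite_Iio M).subset
    intro i hi
    by_contra hiM
    exact hi (hn0 i (le_of_not_gt hiM))
  -- mk of scalar multiples
  have hsmul : ∀ (c : ℂ) (f : MvPolynomial (Fin 2) ℂ),
      Ideal.Quotient.mk I (MvPolynomial.C c * f) = c • Ideal.Quotient.mk I f := by
    intro c f
    rw [← MvPolynomial.smul_eq_C_mul, ← Ideal.Quotient.mkₐ_eq_mk ℂ, map_smul]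
  -- the basis of the quotient
  set T : Finset ((_ : ℕ) × ℕ) := (Finset.range M).sigma (fun b => Finset.range (n b)) with hT
  set v : ↥T → (MvPolynomial (Fin 2) ℂ ⧸ I) :=
    (fun t => Ideal.Quotient.mk I (Px ^ t.1.2 * Py ^ t.1.1)) with hv
  have hmono_mem : ∀ a b : ℕ, n b ≤ a → Px ^ a * Py ^ b ∈ I := by
    intro a b hab
    rw [← Nat.sub_add_cancel hab, pow_add, mul_assoc]
    exact Ideal.mul_mem_left _ _ (hmem b)
  have hspanQ : ⊤ ≤ Submodule.span ℂ (Set.range v) := by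
    have : ∀ f : MvPolynomial (Fin 2) ℂ,
        Ideal.Quotient.mk I f ∈ Submodule.span ℂ (Set.range v) := by
      intro f
      induction f using MvPolynomial.induction_on' with
      | add p q hp hq => rw [map_add]; exact Submodule.add_mem _ hp hq
      | monomial u c =>
        have hu : (monomial u c : MvPolynomial (Fin 2) ℂ)
            = MvPolynomial.C c * Px ^ (u 0) * Py ^ (u 1) := by
          conv_lhs => rw [fin2_finsupp_eq u, monomial_eq_PxPy]
        rw [hu, mul_assoc, hsmul]
        apply Submodule.smul_mem
        by_cases hcase : n (u 1) ≤ u 0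
        · rw [Ideal.Quotient.eq_zero_iff_mem.mpr (hmono_mem _ _ hcase)]
          exact Submodule.zero_mem _
        · push_neg at hcase
          have hbM : u 1 < M := by
            by_contra hbM
            rw [hn0 _ (le_of_not_gt hbM)] at hcase
            omega
          have htT : (⟨u 1, u 0⟩ : (_ : ℕ) × ℕ) ∈ T := by
            rw [hT, Finset.mem_sigma]
            exact ⟨Finset.mem_range.mpr hbM, Finset.mem_range.mpr hcase⟩
          exact Submodule.subset_span ⟨⟨⟨u 1, u 0⟩, htT⟩, rfl⟩
    intro z _
    obtain ⟨f, rfl⟩ := Ideal.Quotient.mk_surjective z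
    exact this f
  have hli : LinearIndependent ℂ v := by
    rw [linearIndependent_iff']
    intro s c hsum t ht
    set F : MvPolynomial (Fin 2) ℂ := ∑ i ∈ s,
      monomial (Finsupp.single 0 i.1.2 + Finsupp.single 1 i.1.1) (c i) with hF
    have hFI : F ∈ I := by
      rw [← Ideal.Quotient.eq_zero_iff_mem, hF, map_sum, ← hsum]
      refine Finset.sum_congr rfl fun i _ => ?_
      rw [monomial_eq_PxPy, mul_assoc, hsmul]
    have htT := t.2
    simp only [hT, Finset.mem_sigma, Finset.mem_range] at htT
    set e₀ : Fin 2 →₀ ℕ := Finsupp.single 0 t.1.2 + Finsupp.single 1 t.1.1 with he₀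
    have he₀1 : e₀ 1 = t.1.1 := by simp [he₀, Finsupp.single_apply]
    have hGI : weightedHomogeneousComponent yWeight t.1.1 F ∈ I := hhom F hFI t.1.1
    obtain ⟨q, hq⟩ := key t.1.1 _ hGI
      (weightedHomogeneousComponent_isWeightedHomogeneous t.1.1 F)
    have hc1 : coeff e₀ (weightedHomogeneousComponent yWeight t.1.1 F) = c t := by
      rw [coeff_weightedHomogeneousComponent,
        if_pos (by rw [weight_yWeight, he₀1]), hF, MvPolynomial.coeff_sum]
      rw [Finset.sum_eq_single_of_mem t ht]
      · rw [MvPolynomial.coeff_monomial, if_pos rfl]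
      · intro i his hit
        rw [MvPolynomial.coeff_monomial, if_neg]
        intro heq
        apply hit
        have h0 := congrArg (fun m : Fin 2 →₀ ℕ => m 0) heq
        have h1 := congrArg (fun m : Fin 2 →₀ ℕ => m 1) heq
        simp only [he₀, Finsupp.add_apply, Finsupp.single_apply] at h0 h1
        norm_num at h0 h1
        exact Subtype.ext (Sigma.ext h1 (heq_of_eq h0))
    have hc2 : coeff e₀ (weightedHomogeneousComponent yWeight t.1.1 F) = 0 := by
      have hm1 : (Px ^ n t.1.1 * Py ^ t.1.1 : MvPolynomial (Fin 2) ℂ)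
          = monomial (Finsupp.single 0 (n t.1.1) + Finsupp.single 1 t.1.1) 1 := by
        rw [monomial_eq_PxPy, map_one, one_mul]
      rw [hq, hm1, MvPolynomial.coeff_mul_monomial', if_neg]
      intro hle
      have := hle  -- Finsupp ≤
      rw [Finsupp.le_def] at this
      have h0 := this 0
      simp only [he₀, Finsupp.add_apply, Finsupp.single_apply] at h0
      norm_num at h0
      omega
    rw [← hc1, hc2]
  let bQ : Module.Basis ↥T ℂ (MvPolynomial (Fin 2) ℂ ⧸ I) := Module.Basis.mk hli hspanQ
  have hcard : Module.finrank ℂ (MvPolynomial (Fin 2) ℂ ⧸ I) = T.card := by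
    rw [Module.finrank_eq_card_basis bQ, Fintype.card_coe]
  have hsumk : ∑ b ∈ Finset.range M, n b = k := by
    rw [← hdim, hcard, hT, Finset.card_sigma]
    simp
  refine ⟨n, hleast, hfin, ?_, hspan⟩
  rw [finsum_eq_finset_sum_of_support_subset n (s := Finset.range M) ?_, hsumk]
  intro i hi
  simp only [Function.mem_support] at hi
  simp only [Finset.coe_range, Set.mem_Iio]
  by_contra h
  exact hi (hn0 i (le_of_not_gt h))
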